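/- If p is an odd prime with p | m-2, then for every N ∈ ℤ_p the equation P_m(x) = N has a solution x ∈ ℤ_p. -/

import Mathlib

open Polynomial

/-- If `p` is an odd prime with `p ∣ m-2`, then for every `N ∈ ℤ_[p]` the
equation `P_m(x) = N` has a solution `x ∈ ℤ_[p]` (stated via the equivalent
doubled equation `2N = (m-2)(x²-x) + 2x`). -/
theorem mgonal_single_universal_padic (p : ℕ) [Fact p.Prime] (hp : Odd p)
    (m : ℤ) (hm : 3 ≤ m) (hdvd : (p : ℤ) ∣ (m - 2)) (N : ℤ_[p]) :
    ∃ x : ℤ_[p], 2 * N = ((m : ℤ_[p]) - 2) * (x ^ 2 - x) + 2 * x := by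
  set c : ℤ_[p] := ((m : ℤ_[p]) - 2) with hc
  have hcnorm : ‖c‖ < 1 := by
    have : c = ((m - 2 : ℤ) : ℤ_[p]) := by push_cast [hc]; ring
    rw [this, PadicInt.norm_int_lt_one_iff_dvd]
    exact hdvd
  have h2 : ‖(2 : ℤ_[p])‖ = 1 := by
    have hp2 : p ≠ 2 := by rintro rfl; simp [Nat.odd_iff] at hp
    have h1 : ¬ ((p:ℤ) ∣ (2:ℤ)) := by
      intro h
      rw [show ((2:ℤ)) = ((2:ℕ):ℤ) by norm_num, Int.natCast_dvd_natCast] at h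
      exact hp2 ((Nat.prime_dvd_prime_iff_eq Fact.out Nat.prime_two).mp h)
    have := (PadicInt.norm_int_lt_one_iff_dvd (p := p) 2).not.mpr h1
    have hle := PadicInt.norm_le_one (2 : ℤ_[p])
    push_cast at this
    linarith [lt_or_eq_of_le hle]
  -- polynomial F(x) = c*(x^2 - x) + 2*x - 2*N
  set F : Polynomial ℤ_[p] := C c * (X ^ 2 - X) + C 2 * X - C (2 * N) with hF
  have hFeval : ∀ x : ℤ_[p], F.eval x = c * (x ^ 2 - x) + 2 * x - 2 * N := by
    intro x; simp [hF]
  have hFderiv : ∀ x : ℤ_[p], F.derivative.eval x = c * (2 * x - 1) + 2 := by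
    intro x; simp [hF, derivative_sub, derivative_add]; norm_num
  have hderivnorm : ‖F.derivative.eval N‖ = 1 := by
    rw [hFderiv]
    have hlt : ‖c * (2 * N - 1)‖ < ‖(2 : ℤ_[p])‖ := by
      rw [h2]
      calc ‖c * (2 * N - 1)‖ ≤ ‖c‖ * 1 := by
            rw [norm_mul]; gcongr; exact PadicInt.norm_le_one _
        _ < 1 := by simpa using hcnorm
    rw [PadicInt.norm_add_eq_max_of_ne (ne_of_lt (by rw [h2] at hlt ⊢; exact hlt)),
      max_eq_right (le_of_lt hlt), h2]
  have hevalnorm : ‖F.eval N‖ < ‖F.derivative.eval N‖ ^ 2 := by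
    rw [hderivnorm, hFeval]
    have : c * (N ^ 2 - N) + 2 * N - 2 * N = c * (N ^ 2 - N) := by ring
    rw [this]
    calc ‖c * (N ^ 2 - N)‖ ≤ ‖c‖ * 1 := by
          rw [norm_mul]; gcongr; exact PadicInt.norm_le_one _
      _ < 1 ^ 2 := by simpa using hcnorm
  obtain ⟨z, hz, -⟩ := hensels_lemma hevalnorm
  refine ⟨z, ?_⟩
  rw [Polynomial.coe_aeval_eq_eval, hFeval] at hz
  linear_combination -hz
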